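/- Let n ≥ 2, let C ⊆ ℝⁿ be a spindle convex set, let x ∈ C, and let v be a unit vector such that the hyperplane through x with normal v supports C at x, i.e. ⟨v, y − x⟩ ≤ 0 for all y ∈ C. Then C is contained in the closed unit ball with center x − v, i.e. C ⊆ {y : ‖y − (x − v)‖ ≤ 1}. -/

import Mathlib

open RealInnerProductSpace

lemma norm_eq_one_of_sq {r : ℝ} (h0 : 0 ≤ r) (h : r^2 = 1) : r = 1 := by
  have h1 : (r - 1) * (r + 1) = 0 := by linear_combination h
  rcases mul_eq_zero.mp h1 with h' | h'
  · linarith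
  · linarith

lemma aux_dist {E : Type*} [NormedAddCommGroup E] [InnerProductSpace ℝ E]
    {x y c c' z : E} {l m : ℝ} (hl : 0 ≤ l) (hm : 0 ≤ m) (hsum : 1 ≤ l + m)
    (hx1 : ‖x - c‖ = 1) (hy1 : ‖y - c‖ = 1)
    (hz : z - c = l • (x - c) + m • (y - c)) (hw : ‖z - c‖ ≤ 1)
    (h1 : dist c' x ≤ 1) (h2 : dist c' y ≤ 1) : dist z c' ≤ 1 := by
  have e1 : ‖(c - c') + (x - c)‖ ≤ 1 := by
    rw [show (c - c') + (x - c) = x - c' by abel, ← dist_eq_norm, dist_comm]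
    exact h1
  have e2 : ‖(c - c') + (y - c)‖ ≤ 1 := by
    rw [show (c - c') + (y - c) = y - c' by abel, ← dist_eq_norm, dist_comm]
    exact h2
  have q1 : ‖(c - c') + (x - c)‖^2 = ‖c - c'‖^2 + 2 * ⟪c - c', x - c⟫ + ‖x - c‖^2 :=
    norm_add_sq_real _ _
  have q2 : ‖(c - c') + (y - c)‖^2 = ‖c - c'‖^2 + 2 * ⟪c - c', y - c⟫ + ‖y - c‖^2 :=
    norm_add_sq_real _ _
  have i1 : ⟪c - c', x - c⟫ ≤ - ‖c - c'‖^2 / 2 := by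
    nlinarith [norm_nonneg ((c - c') + (x - c))]
  have i2 : ⟪c - c', y - c⟫ ≤ - ‖c - c'‖^2 / 2 := by
    nlinarith [norm_nonneg ((c - c') + (y - c))]
  have hzc : z - c' = (c - c') + (z - c) := by abel
  have q3 : ‖z - c'‖^2 = ‖c - c'‖^2 + 2 * ⟪c - c', z - c⟫ + ‖z - c‖^2 := by
    rw [hzc]; exact norm_add_sq_real _ _
  have i3 : ⟪c - c', z - c⟫ = l * ⟪c - c', x - c⟫ + m * ⟪c - c', y - c⟫ := by
    rw [hz, inner_add_right, real_inner_smul_right, real_inner_smul_right]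
  rw [dist_eq_norm]
  have key : ‖z - c'‖^2 ≤ 1 := by
    nlinarith [mul_le_mul_of_nonneg_left i1 hl, mul_le_mul_of_nonneg_left i2 hm,
      mul_nonneg (by linarith : (0:ℝ) ≤ l + m - 1) (sq_nonneg (‖c - c'‖)),
      norm_nonneg (z - c), hw]
  nlinarith [norm_nonneg (z - c')]

section RealLemmas

lemma R_ha2 {t d a : ℝ} (h1 : 1 < t) (h2 : t^2 = d^2 + 2*a + 1) : -d^2/2 < a := by
  nlinarith

lemma R_sqlt4 {d : ℝ} (h0 : 0 ≤ d) (h : d < 2) : d^2 < 4 := by nlinarith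

lemma R_sqle4 {d : ℝ} (h0 : 0 ≤ d) (h : d ≤ 2) : d^2 ≤ 4 := by nlinarith

lemma R_haa {d a : ℝ} (hd0 : 0 < d) (ha0 : a ≤ 0) (ha2 : -d^2/2 < a) :
    a^2 < d^4/4 := by
  have h1 : 0 < d^2/2 + a := by linarith
  have h2 : 0 < d^2/2 - a := by nlinarith
  nlinarith [mul_pos h2 h1]

lemma R_h4 {d a : ℝ} (hd0 : 0 < d) (haa : a^2 < d^4/4) : a^2/d^2 < d^2/4 := by
  rw [div_lt_div_iff₀ (pow_pos hd0 2) (by norm_num : (0:ℝ) < 4)]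
  nlinarith

lemma R_sqlt_false {h : ℝ} (hh0 : 0 < h) (hlt : h^2 < 0) : False := by nlinarith

lemma R_root {h b : ℝ} (hh0 : 0 < h) (hb0 : 0 ≤ b) (h2 : h^2 < b^2) : h < b := by
  nlinarith

lemma R_E0 {d h b a : ℝ} (hd0 : 0 < d) (hh0 : 0 < h) (hbh : h < b)
    (ha2 : -d^2/2 < a) : 0 < (d^2/2)*h*b + a*h^2 := by
  have h1 : 0 < (d^2/2)*h*(b-h) :=
    mul_pos (mul_pos (div_pos (pow_pos hd0 2) two_pos) hh0) (sub_pos.mpr hbh)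
  have h2 : 0 < (a + d^2/2)*h^2 := mul_pos (by linarith) (pow_pos hh0 2)
  nlinarith [h1, h2]

lemma R_N2pos {d s : ℝ} (hd0 : 0 ≤ d) (hdlt : d < 2) (hs0 : 0 < s)
    (hs12 : s ≤ 1/2) : 0 < 1 - d^2*s*(1-s) := by
  have h1 : 0 < s*(1-s) := mul_pos hs0 (by linarith)
  have h2 : s*(1-s) ≤ 1/4 := by nlinarith [sq_nonneg (1-2*s)]
  have h3 : d^2*(s*(1-s)) < 4*(s*(1-s)) :=
    mul_lt_mul_of_pos_right (R_sqlt4 hd0 hdlt) h1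
  nlinarith [h2, h3]

lemma R_le_of_sq {N M : ℝ} (hN : 0 ≤ N) (hM : 0 ≤ M) (h : N^2 ≤ M^2) : N ≤ M := by
  nlinarith [sq_nonneg (N - M), sq_nonneg (N + M)]

lemma R_Nle {N d s : ℝ} (hNnn : 0 ≤ N) (hN2 : N^2 = 1 - d^2*s*(1-s)) (hd0 : 0 ≤ d)
    (hd2 : d ≤ 2) (hs0 : 0 ≤ s) (hs12 : s ≤ 1/2) : N ≤ 1 - (d^2/2)*s*(1-s) := by
  have hss0 : 0 ≤ s*(1-s) := mul_nonneg hs0 (by linarith)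
  have hss : s*(1-s) ≤ 1/4 := by nlinarith [sq_nonneg (1-2*s)]
  have hb : d^2*(s*(1-s)) ≤ 4*(1/4) :=
    mul_le_mul (R_sqle4 hd0 hd2) hss hss0 (by norm_num)
  have hM : (0:ℝ) ≤ 1 - (d^2/2)*s*(1-s) := by nlinarith [hb]
  apply R_le_of_sq hNnn hM
  nlinarith [sq_nonneg ((d^2/2)*s*(1-s))]

lemma R_key {N A B a d s ε : ℝ} (hNA : N*A ≤ A - (d^2/2)*s*(1-s)*A)
    (hBA : B - A = a) (hEs : ε = a + (d^2/2)*A) (hsA : d^2*s*A ≤ ε)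
    (hs0 : 0 < s) (hE0 : 0 < ε) : N*A < (1-s)*A + s*B := by
  have h1 : (d^2/2)*s*A ≤ ε/2 := by linarith
  have h2 : s*((d^2/2)*s*A) ≤ s*(ε/2) := mul_le_mul_of_nonneg_left h1 hs0.le
  have h3 : 0 < s*ε := mul_pos hs0 hE0
  have h4 : s*a = s*ε - s*((d^2/2)*A) := by rw [hEs]; ring
  have h5 : s*B = s*A + s*a := by
    have : s*B - s*A = s*(B-A) := by ring
    rw [hBA] at this
    linarith
  nlinarith [h2, h3, h4, h5, hNA]

lemma R_q0 {w p m i : ℝ} (hp0 : 0 ≤ p) (hm0 : 0 ≤ m) (hw : 0 ≤ w)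
    (hp2 : p^2 = w^2 + 2*i + 1) (hm2 : m^2 = w^2 - 2*i + 1)
    (hp1 : p ≤ 1) (hm1 : m ≤ 1) : w ≤ 0 := by
  nlinarith [mul_le_one₀ hp1 hp0 hp1, mul_le_one₀ hm1 hm0 hm1, sq_nonneg w]

lemma R_fin1 {a : ℝ} (h1 : -2^2/2 < a) (h2 : a/2 + 1 ≤ 0) : False := by linarith

lemma R_fin2 {X A : ℝ} (h5 : 0 < X - A) (hle : -A + X ≤ 0) : False := by linarith

end RealLemmas

noncomputable section

/-- `B[X]`: the intersection of all closed unit balls centered at points of `X`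
(`Set.univ` when `X = ∅`). -/
def ballInter {n : ℕ} (X : Set (EuclideanSpace ℝ (Fin n))) :
    Set (EuclideanSpace ℝ (Fin n)) :=
  ⋂ x ∈ X, Metric.closedBall x 1

/-- The closed spindle `[a,b]_s`: `B[B[{a,b}]]` if `dist a b ≤ 2`, all of the space
otherwise. -/
def spindle {n : ℕ} (a b : EuclideanSpace ℝ (Fin n)) :
    Set (EuclideanSpace ℝ (Fin n)) :=
  if dist a b ≤ 2 then ballInter (ballInter {a, b}) else Set.univ

/-- A set is spindle convex if it contains the closed spindle of any two of its points. -/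
def SpindleConvex {n : ℕ} (C : Set (EuclideanSpace ℝ (Fin n))) : Prop :=
  ∀ a ∈ C, ∀ b ∈ C, spindle a b ⊆ C

/-- The spindle convex hull: the intersection of all spindle convex sets containing `X`. -/
def spindleHull {n : ℕ} (X : Set (EuclideanSpace ℝ (Fin n))) :
    Set (EuclideanSpace ℝ (Fin n)) :=
  ⋂₀ {C : Set (EuclideanSpace ℝ (Fin n)) | X ⊆ C ∧ SpindleConvex C}

/-- Arc-distance `ρ(a,b) = 2 · arcsin(‖a - b‖ / 2)`. -/
def arcDist {n : ℕ} (a b : EuclideanSpace ℝ (Fin n)) : ℝ :=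
  2 * Real.arcsin (dist a b / 2)

lemma mem_spindle_of_forall {n : ℕ} {a b : EuclideanSpace ℝ (Fin n)}
    (hab : dist a b ≤ 2) {z : EuclideanSpace ℝ (Fin n)}
    (h : ∀ c', dist c' a ≤ 1 → dist c' b ≤ 1 → dist z c' ≤ 1) :
    z ∈ spindle a b := by
  rw [spindle, if_pos hab]
  simp only [ballInter, Set.mem_iInter, Metric.mem_closedBall, Set.mem_insert_iff,
    Set.mem_singleton_iff]
  intro c' hc'
  exact h c' (hc' a (Or.inl rfl)) (hc' b (Or.inr rfl))

theorem spindleConvex_subset_supporting_unit_ball (n : ℕ) (hn : 2 ≤ n)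
    (C : Set (EuclideanSpace ℝ (Fin n))) (hC : SpindleConvex C)
    (x : EuclideanSpace ℝ (Fin n)) (hx : x ∈ C)
    (v : EuclideanSpace ℝ (Fin n)) (hv : ‖v‖ = 1)
    (hsupp : ∀ y ∈ C, (inner ℝ v (y - x) : ℝ) ≤ 0) :
    C ⊆ Metric.closedBall (x - v) 1 := by
  intro y hy
  rw [Metric.mem_closedBall]
  by_contra hcon
  push_neg at hcon
  -- first dispose of the far case
  by_cases hd : dist x y ≤ 2
  swap
  · push_neg at hd
    have hsub : Set.univ ⊆ C := by
      have := hC x hx y hy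
      rwa [spindle, if_neg (not_le.mpr hd)] at this
    have hxv : x + v ∈ C := hsub (Set.mem_univ _)
    have h1 := hsupp (x + v) hxv
    rw [add_sub_cancel_left, real_inner_self_eq_norm_sq, hv] at h1
    norm_num at h1
  -- main case
  obtain ⟨u, hu⟩ : ∃ u' : EuclideanSpace ℝ (Fin n), u' = y - x := ⟨_, rfl⟩
  obtain ⟨d, hdd⟩ : ∃ d' : ℝ, d' = ‖u‖ := ⟨_, rfl⟩
  obtain ⟨a, ha⟩ : ∃ a' : ℝ, a' = ⟪v, u⟫ := ⟨_, rfl⟩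
  have hvu : ⟪v, u⟫ = a := ha.symm
  have hvv : ⟪v, v⟫ = (1:ℝ) := by rw [real_inner_self_eq_norm_sq, hv]; norm_num
  have huu : ⟪u, u⟫ = d^2 := by rw [hdd]; exact real_inner_self_eq_norm_sq u
  have huv : ⟪u, v⟫ = a := by rw [real_inner_comm]; exact hvu
  have ha0 : a ≤ 0 := by rw [ha, hu]; exact hsupp y hy
  have hd2 : d ≤ 2 := by rwa [hdd, hu, ← dist_eq_norm, dist_comm]
  have hcon' : 1 < ‖u + v‖ := by
    rw [dist_eq_norm] at hcon
    rwa [show y - (x - v) = u + v by rw [hu]; abel] at hcon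
  have hqu : ‖u + v‖^2 = d^2 + 2*a + 1 := by
    rw [norm_add_sq_real, huv, hv, hdd]; ring
  have ha2 : -d^2/2 < a := R_ha2 hcon' hqu
  have hdnn : 0 ≤ d := by rw [hdd]; exact norm_nonneg u
  have hd0 : 0 < d := by
    rcases hdnn.lt_or_eq with h | h
    · exact h
    · exfalso
      rw [← h] at ha2
      norm_num at ha2
      linarith
  have hdne : d ≠ 0 := ne_of_gt hd0
  -- construct the blocking point z depending on whether d = 2 or d < 2
  rcases lt_or_eq_of_le hd2 with hdlt | hdeq2
  · -- d < 2 : main construction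
    have hd4 : d^2 < 4 := R_sqlt4 hdnn hdlt
    obtain ⟨h, hhdef⟩ : ∃ h' : ℝ, h' = Real.sqrt (1 - d^2/4) := ⟨_, rfl⟩
    have hh2 : h^2 = 1 - d^2/4 := by rw [hhdef]; exact Real.sq_sqrt (by linarith)
    have hh0 : 0 < h := by rw [hhdef]; exact Real.sqrt_pos.mpr (by linarith)
    obtain ⟨P, hP⟩ : ∃ P' : EuclideanSpace ℝ (Fin n), P' = v - (a/d^2) • u := ⟨_, rfl⟩
    have hd2ne : d^2 ≠ 0 := pow_ne_zero 2 hdne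
    have t1 : ⟪P, u⟫ = 0 := by
      simp only [hP, inner_sub_left, real_inner_smul_left, huu, hvu]
      field_simp
      ring
    have t1' : ⟪u, P⟫ = 0 := by rw [real_inner_comm]; exact t1
    have t3 : ⟪P, P⟫ = 1 - a^2/d^2 := by
      simp only [hP, inner_sub_left, inner_sub_right, real_inner_smul_left,
        real_inner_smul_right, hvv, huu, hvu, huv]
      field_simp
      ring
    have t2 : ⟪v, P⟫ = 1 - a^2/d^2 := by
      simp only [hP, inner_sub_right, real_inner_smul_right, hvv, hvu]
      field_simp
    obtain ⟨b, hbdef⟩ : ∃ b' : ℝ, b' = ‖P‖ := ⟨_, rfl⟩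
    have hb2 : b^2 = 1 - a^2/d^2 := by
      rw [hbdef, ← real_inner_self_eq_norm_sq, t3]
    have haa : a^2 < d^4/4 := R_haa hd0 ha0 ha2
    have hbh2 : h^2 < b^2 := by
      rw [hh2, hb2]
      have h4 := R_h4 hd0 haa
      linarith
    have hbnn : 0 ≤ b := by rw [hbdef]; exact norm_nonneg P
    have hb0 : 0 < b := by
      rcases hbnn.lt_or_eq with h' | h'
      · exact h'
      · exact absurd hbh2 (by rw [← h']; exact fun hc => R_sqlt_false hh0 (by linarith [hc]))
    have hbh : h < b := R_root hh0 hbnn hbh2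
    have hbne : b ≠ 0 := ne_of_gt hb0
    obtain ⟨k, hkdef⟩ : ∃ k' : ℝ, k' = h/b := ⟨_, rfl⟩
    have hk : k * b = h := by rw [hkdef]; exact div_mul_cancel₀ h hbne
    obtain ⟨c, hc⟩ : ∃ c' : EuclideanSpace ℝ (Fin n),
        c' = (x + (2:ℝ)⁻¹ • u) - k • P := ⟨_, rfl⟩
    have hw0 : x - c = k • P - (2:ℝ)⁻¹ • u := by rw [hc]; module
    have hw1 : y - c = k • P + (2:ℝ)⁻¹ • u := by
      rw [hc, show y = x + u by rw [hu]; abel]; module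
    obtain ⟨A, hAdef⟩ : ∃ A' : ℝ, A' = h*b - a/2 := ⟨_, rfl⟩
    obtain ⟨B, hBdef⟩ : ∃ B' : ℝ, B' = h*b + a/2 := ⟨_, rfl⟩
    have hA : ⟪v, x - c⟫ = A := by
      rw [hw0, inner_sub_right, real_inner_smul_right, real_inner_smul_right, t2, hvu,
        hAdef]
      linear_combination (-k) * hb2 + b * hk
    have hB : ⟪v, y - c⟫ = B := by
      rw [hw1, inner_add_right, real_inner_smul_right, real_inner_smul_right, t2, hvu,
        hBdef]
      linear_combination (-k) * hb2 + b * hk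
    have hn0 : ‖x - c‖ = 1 := by
      apply norm_eq_one_of_sq (norm_nonneg _)
      rw [← real_inner_self_eq_norm_sq, hw0]
      simp only [inner_sub_left, inner_sub_right, real_inner_smul_left,
        real_inner_smul_right, t3, t1, t1', huu]
      linear_combination (-(k^2)) * hb2 + (k*b + h) * hk + hh2
    have hn1 : ‖y - c‖ = 1 := by
      apply norm_eq_one_of_sq (norm_nonneg _)
      rw [← real_inner_self_eq_norm_sq, hw1]
      simp only [inner_add_left, inner_add_right, real_inner_smul_left,
        real_inner_smul_right, t3, t1, t1', huu]
      linear_combination (-(k^2)) * hb2 + (k*b + h) * hk + hh2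
    have hrho : ⟪x - c, y - c⟫ = 1 - d^2/2 := by
      rw [hw0, hw1]
      simp only [inner_sub_left, inner_add_left, inner_add_right, inner_sub_right,
        real_inner_smul_left, real_inner_smul_right, t3, t1, t1', huu]
      linear_combination (-(k^2)) * hb2 + (k*b + h) * hk + hh2
    obtain ⟨ε, hEdef⟩ : ∃ e' : ℝ, e' = (d^2/2)*h*b + a*h^2 := ⟨_, rfl⟩
    have hA0 : 0 < A := by
      rw [hAdef]
      have := mul_pos hh0 hb0
      linarith
    have hE0 : 0 < ε := by rw [hEdef]; exact R_E0 hd0 hh0 hbh ha2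
    obtain ⟨s, hsdef⟩ : ∃ s' : ℝ, s' = min (1/2) (ε/(d^2*A)) := ⟨_, rfl⟩
    have hdA : 0 < d^2*A := mul_pos (pow_pos hd0 2) hA0
    have hs0 : 0 < s := by
      rw [hsdef]; exact lt_min (by norm_num) (div_pos hE0 hdA)
    have hs12 : s ≤ 1/2 := by rw [hsdef]; exact min_le_left _ _
    have hsA : d^2 * s * A ≤ ε := by
      have h' : s ≤ ε/(d^2*A) := by rw [hsdef]; exact min_le_right _ _
      rw [le_div_iff₀ hdA] at h'
      have heq : s*(d^2*A) = d^2*s*A := by ring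
      linarith [heq ▸ h']
    obtain ⟨N, hNdef⟩ : ∃ N' : ℝ, N' = ‖(1-s) • (x - c) + s • (y - c)‖ := ⟨_, rfl⟩
    have hrho' : ⟪y - c, x - c⟫ = 1 - d^2/2 := by rw [real_inner_comm]; exact hrho
    have i00 : ⟪x - c, x - c⟫ = (1:ℝ) := by
      rw [real_inner_self_eq_norm_sq, hn0]; norm_num
    have i11 : ⟪y - c, y - c⟫ = (1:ℝ) := by
      rw [real_inner_self_eq_norm_sq, hn1]; norm_num
    have hN2 : N^2 = 1 - d^2*s*(1-s) := by
      rw [hNdef, ← real_inner_self_eq_norm_sq]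
      simp only [inner_add_left, inner_add_right, real_inner_smul_left,
        real_inner_smul_right, i00, i11, hrho, hrho']
      ring
    have hNnn : 0 ≤ N := by rw [hNdef]; exact norm_nonneg _
    have hN2pos : 0 < N^2 := by
      rw [hN2]; exact R_N2pos hdnn hdlt hs0 hs12
    have hNpos : 0 < N := by
      rcases hNnn.lt_or_eq with h' | h'
      · exact h'
      · exfalso; rw [← h'] at hN2pos; norm_num at hN2pos
    have hNle : N ≤ 1 - (d^2/2)*s*(1-s) := R_Nle hNnn hN2 hdnn hd2 hs0.le hs12
    have hN1 : N ≤ 1 := by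
      have h1 : 0 ≤ (d^2/2)*s*(1-s) :=
        mul_nonneg (mul_nonneg (by positivity) hs0.le) (by linarith)
      linarith
    obtain ⟨z, hz⟩ : ∃ z' : EuclideanSpace ℝ (Fin n),
        z' = c + N⁻¹ • ((1-s) • (x - c) + s • (y - c)) := ⟨_, rfl⟩
    have hzsp : z ∈ spindle x y := by
      apply mem_spindle_of_forall hd
      intro c' h1 h2
      refine aux_dist (l := N⁻¹*(1-s)) (m := N⁻¹*s) ?_ ?_ ?_ hn0 hn1 ?_ ?_ h1 h2
      · exact mul_nonneg (inv_nonneg.mpr hNnn) (by linarith)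
      · exact mul_nonneg (inv_nonneg.mpr hNnn) hs0.le
      · have heq : N⁻¹*(1-s) + N⁻¹*s = N⁻¹ := by ring
        rw [heq]
        exact (one_le_inv₀ hNpos).2 hN1
      · rw [hz]; module
      · rw [hz, add_sub_cancel_left, norm_smul, Real.norm_eq_abs,
          abs_of_pos (inv_pos.mpr hNpos), ← hNdef, inv_mul_cancel₀ (ne_of_gt hNpos)]
    have hzC : z ∈ C := hC x hx y hy hzsp
    have hle := hsupp z hzC
    have hcomp : (inner ℝ v (z - x) : ℝ) = -A + N⁻¹ * ((1-s)*A + s*B) := by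
      rw [show z - x = (c - x) + N⁻¹ • ((1-s) • (x - c) + s • (y - c)) by rw [hz]; abel,
        inner_add_right, real_inner_smul_right, inner_add_right,
        real_inner_smul_right, real_inner_smul_right, hB,
        show (c - x : EuclideanSpace ℝ (Fin n)) = -(x - c) by abel,
        inner_neg_right, hA]
    rw [hcomp] at hle
    have hNA : N * A ≤ A - (d^2/2)*s*(1-s)*A := by
      calc N * A ≤ (1 - (d^2/2)*s*(1-s)) * A := mul_le_mul_of_nonneg_right hNle hA0.le
        _ = A - (d^2/2)*s*(1-s)*A := by ring
    have key : N * A < (1-s)*A + s*B := by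
      have hBA : B - A = a := by rw [hAdef, hBdef]; ring
      have hEs : ε = a + (d^2/2)*A := by rw [hEdef, hAdef, hh2]; ring
      exact R_key hNA hBA hEs hsA hs0 hE0
    have h5 : 0 < N⁻¹ * ((1-s)*A + s*B) - A := by
      have h6 : N⁻¹ * (N*A) < N⁻¹ * ((1-s)*A + s*B) :=
        mul_lt_mul_of_pos_left key (inv_pos.mpr hNpos)
      rw [← mul_assoc, inv_mul_cancel₀ (ne_of_gt hNpos), one_mul] at h6
      linarith
    exact R_fin2 h5 hle
  · -- d = 2 : spindle is the unit ball around the midpoint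
    obtain ⟨z, hz⟩ : ∃ z' : EuclideanSpace ℝ (Fin n),
        z' = x + (2:ℝ)⁻¹ • u + v := ⟨_, rfl⟩
    have hzsp : z ∈ spindle x y := by
      apply mem_spindle_of_forall hd
      intro c' h1 h2
      obtain ⟨q, hq⟩ : ∃ q' : EuclideanSpace ℝ (Fin n),
          q' = c' - (x + (2:ℝ)⁻¹ • u) := ⟨_, rfl⟩
      have e1 : ‖q + (2:ℝ)⁻¹ • u‖ ≤ 1 := by
        rw [show q + (2:ℝ)⁻¹ • u = c' - x by rw [hq]; module, ← dist_eq_norm]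
        exact h1
      have e2 : ‖q - (2:ℝ)⁻¹ • u‖ ≤ 1 := by
        rw [show q - (2:ℝ)⁻¹ • u = c' - y by rw [hq, hu]; module, ← dist_eq_norm]
        exact h2
      have nu : ‖(2:ℝ)⁻¹ • u‖ = 1 := by
        rw [norm_smul, Real.norm_eq_abs, ← hdd, hdeq2,
          abs_of_pos (by norm_num : (0:ℝ) < 2⁻¹)]
        norm_num
      have q1 : ‖q + (2:ℝ)⁻¹ • u‖^2 = ‖q‖^2 + 2*⟪q, (2:ℝ)⁻¹ • u⟫ + 1 := by
        rw [norm_add_sq_real, nu]; norm_num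
      have q2 : ‖q - (2:ℝ)⁻¹ • u‖^2 = ‖q‖^2 - 2*⟪q, (2:ℝ)⁻¹ • u⟫ + 1 := by
        rw [norm_sub_sq_real, nu]; norm_num
      have hq0 : ‖q‖ ≤ 0 :=
        R_q0 (norm_nonneg _) (norm_nonneg _) (norm_nonneg q) q1 q2 e1 e2
      have hq0' : q = 0 := norm_le_zero_iff.mp hq0
      have hzq : z - c' = v - q := by rw [hz, hq]; module
      rw [dist_eq_norm, hzq, hq0', sub_zero, hv]
    have hzC : z ∈ C := hC x hx y hy hzsp
    have hle := hsupp z hzC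
    have hvz : (inner ℝ v (z - x) : ℝ) = a/2 + 1 := by
      rw [show z - x = (2:ℝ)⁻¹ • u + v by rw [hz]; abel, inner_add_right,
        real_inner_smul_right, hvu, hvv]
      ring
    rw [hvz] at hle
    rw [hdeq2] at ha2
    exact R_fin1 ha2 hle
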